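/- For every finite simple graph G, |ker(G)| + |diadem(G)| ≤ 2·α(G). -/

import Mathlib

variable {V : Type*} [Fintype V] [DecidableEq V]

/-- `S` is an independent set of `G`. -/
def IsIndep (G : SimpleGraph V) (S : Set V) : Prop :=
  ∀ ⦃u⦄, u ∈ S → ∀ ⦃v⦄, v ∈ S → ¬ G.Adj u v

/-- The independence number `α(G)`: the maximum cardinality of an independent set. -/
noncomputable def indepNum (G : SimpleGraph V) : ℕ :=
  sSup {n : ℕ | ∃ S : Set V, IsIndep G S ∧ S.ncard = n}

/-- `S` is a maximum independent set of `G`. -/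
def IsMaxIndep (G : SimpleGraph V) (S : Set V) : Prop :=
  IsIndep G S ∧ ∀ T : Set V, IsIndep G T → T.ncard ≤ S.ncard

/-- The neighborhood `N(X)` of a set of vertices `X`. -/
def nbhdSet (G : SimpleGraph V) (X : Set V) : Set V :=
  {v | ∃ u ∈ X, G.Adj u v}

/-- The difference `d_G(X) = |X| - |N(X)|` of a vertex set `X`. -/
noncomputable def diffSet (G : SimpleGraph V) (X : Set V) : ℤ :=
  (X.ncard : ℤ) - ((nbhdSet G X).ncard : ℤ)

/-- `I` is a critical independent set of `G`. -/
def IsCriticalIndep (G : SimpleGraph V) (I : Set V) : Prop :=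
  IsIndep G I ∧ ∀ J : Set V, IsIndep G J → diffSet G J ≤ diffSet G I

/-- `I` is a maximum-cardinality critical independent set of `G`. -/
def IsMaxCriticalIndep (G : SimpleGraph V) (I : Set V) : Prop :=
  IsCriticalIndep G I ∧ ∀ J : Set V, IsCriticalIndep G J → J.ncard ≤ I.ncard

/-- `core(G)`: the intersection of all maximum independent sets of `G`. -/
def coreSet (G : SimpleGraph V) : Set V := ⋂₀ {S : Set V | IsMaxIndep G S}

/-- `corona(G)`: the union of all maximum independent sets of `G`. -/
def coronaSet (G : SimpleGraph V) : Set V := ⋃₀ {S : Set V | IsMaxIndep G S}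

/-- `ker(G)`: the intersection of all critical independent sets of `G`. -/
def kerSet (G : SimpleGraph V) : Set V := ⋂₀ {S : Set V | IsCriticalIndep G S}

/-- `diadem(G)`: the union of all critical independent sets of `G`. -/
def diademSet (G : SimpleGraph V) : Set V := ⋃₀ {S : Set V | IsCriticalIndep G S}

/-- `nucleus(G)`: the intersection of all maximum-cardinality critical independent
sets of `G`. -/
def nucleusSet (G : SimpleGraph V) : Set V := ⋂₀ {S : Set V | IsMaxCriticalIndep G S}

/-- `C` is the vertex set of some odd cycle of `G`. -/
def IsOddCycleVertexSet (G : SimpleGraph V) (C : Set V) : Prop :=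
  ∃ (v : V) (w : G.Walk v v), w.IsCycle ∧ Odd w.length ∧ {x | x ∈ w.support} = C

/-- The maximum cardinality of a set of pairwise vertex-distinct odd cycles of `G`,
i.e. the number of distinct vertex sets of odd cycles of `G`. -/
noncomputable def numVertexDistinctOddCycles (G : SimpleGraph V) : ℕ :=
  {C : Set V | IsOddCycleVertexSet G C}.ncard

/-- `E` is the edge set of some odd cycle of `G`. -/
def IsOddCycleEdgeSet (G : SimpleGraph V) (E : Set (Sym2 V)) : Prop :=
  ∃ (v : V) (w : G.Walk v v), w.IsCycle ∧ Odd w.length ∧ {e | e ∈ w.edges} = E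

/-- The number of (distinct) odd cycles of `G`, where a cycle is identified with
its edge set. -/
noncomputable def numOddCycles (G : SimpleGraph V) : ℕ :=
  {E : Set (Sym2 V) | IsOddCycleEdgeSet G E}.ncard


section Aux

variable {V : Type*} [Fintype V] [DecidableEq V]

lemma nbhd_mono (G : SimpleGraph V) {X Y : Set V} (h : X ⊆ Y) :
    nbhdSet G X ⊆ nbhdSet G Y := by
  rintro v ⟨u, hu, huv⟩
  exact ⟨u, h hu, huv⟩

lemma nbhd_union (G : SimpleGraph V) (X Y : Set V) :
    nbhdSet G (X ∪ Y) = nbhdSet G X ∪ nbhdSet G Y := by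
  ext v
  constructor
  · rintro ⟨u, hu | hu, huv⟩
    exacts [Or.inl ⟨u, hu, huv⟩, Or.inr ⟨u, hu, huv⟩]
  · rintro (⟨u, hu, huv⟩ | ⟨u, hu, huv⟩)
    exacts [⟨u, Or.inl hu, huv⟩, ⟨u, Or.inr hu, huv⟩]

lemma indep_subset (G : SimpleGraph V) {X Y : Set V} (h : X ⊆ Y) (hY : IsIndep G Y) :
    IsIndep G X := fun _ hu _ hv => hY (h hu) (h hv)

/-- Supermodularity of `d_G`. -/
lemma diff_supermod (G : SimpleGraph V) (X Y : Set V) :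
    diffSet G X + diffSet G Y ≤ diffSet G (X ∪ Y) + diffSet G (X ∩ Y) := by
  have h1 : (X ∪ Y).ncard + (X ∩ Y).ncard = X.ncard + Y.ncard :=
    Set.ncard_union_add_ncard_inter X Y (Set.toFinite _) (Set.toFinite _)
  have h2 : (nbhdSet G (X ∪ Y)).ncard + (nbhdSet G (X ∩ Y)).ncard ≤
      (nbhdSet G X).ncard + (nbhdSet G Y).ncard := by
    have hu : (nbhdSet G X ∪ nbhdSet G Y).ncard + (nbhdSet G X ∩ nbhdSet G Y).ncard =
        (nbhdSet G X).ncard + (nbhdSet G Y).ncard :=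
      Set.ncard_union_add_ncard_inter _ _ (Set.toFinite _) (Set.toFinite _)
    have hsub : nbhdSet G (X ∩ Y) ⊆ nbhdSet G X ∩ nbhdSet G Y :=
      Set.subset_inter (nbhd_mono G Set.inter_subset_left)
        (nbhd_mono G Set.inter_subset_right)
    have := Set.ncard_le_ncard hsub (Set.toFinite _)
    rw [nbhd_union]
    omega
  unfold diffSet
  push_cast
  omega

lemma indep_sdiff_nbhd (G : SimpleGraph V) (X : Set V) :
    IsIndep G (X \ nbhdSet G X) := by
  intro u hu v hv hadj
  exact hv.2 ⟨u, hu.1, hadj⟩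

/-- Zhang-style: removing the self-neighborhood does not decrease `d_G`. -/
lemma diff_le_sdiff_nbhd (G : SimpleGraph V) (X : Set V) :
    diffSet G X ≤ diffSet G (X \ nbhdSet G X) := by
  set I := X \ nbhdSet G X with hI
  have hIX : I ⊆ X := Set.diff_subset
  have hcard : I.ncard + (X ∩ nbhdSet G X).ncard = X.ncard := by
    have : I = X \ (X ∩ nbhdSet G X) := by
      rw [hI, Set.diff_self_inter]
    rw [this]
    exact Set.ncard_diff_add_ncard_of_subset Set.inter_subset_left (Set.toFinite _)
  have hNsub : nbhdSet G I ⊆ nbhdSet G X \ (X ∩ nbhdSet G X) := by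
    rintro v ⟨u, hu, huv⟩
    refine ⟨⟨u, hIX hu, huv⟩, ?_⟩
    rintro ⟨hvX, -⟩
    exact hu.2 ⟨v, hvX, huv.symm⟩
  have hNcard : (nbhdSet G X \ (X ∩ nbhdSet G X)).ncard + (X ∩ nbhdSet G X).ncard =
      (nbhdSet G X).ncard :=
    Set.ncard_diff_add_ncard_of_subset Set.inter_subset_right (Set.toFinite _)
  have hle : (nbhdSet G I).ncard ≤ (nbhdSet G X \ (X ∩ nbhdSet G X)).ncard :=
    Set.ncard_le_ncard hNsub (Set.toFinite _)
  unfold diffSet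
  push_cast
  omega

/-- Zhang's theorem: `d_G` of an arbitrary set is at most the critical difference. -/
lemma diff_le_crit (G : SimpleGraph V) {A : Set V} (hA : IsCriticalIndep G A) (X : Set V) :
    diffSet G X ≤ diffSet G A :=
  le_trans (diff_le_sdiff_nbhd G X) (hA.2 _ (indep_sdiff_nbhd G X))

lemma exists_crit (G : SimpleGraph V) : ∃ A, IsCriticalIndep G A := by
  have hfin : {S : Set V | IsIndep G S}.Finite := Set.toFinite _
  have hne : {S : Set V | IsIndep G S}.Nonempty := ⟨∅, fun u hu => absurd hu (by simp)⟩
  obtain ⟨A, hA, hmax⟩ := Set.exists_max_image _ (diffSet G) hfin hne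
  refine ⟨A, hA, fun J hJ => ?_⟩
  by_contra h
  push_neg at h
  exact absurd (hmax J hJ) (not_le.mpr h)

lemma exists_max_crit (G : SimpleGraph V) :
    ∃ A, IsCriticalIndep G A ∧ ∀ B, IsCriticalIndep G B → B.ncard ≤ A.ncard := by
  have hfin : {S : Set V | IsCriticalIndep G S}.Finite := Set.toFinite _
  obtain ⟨A₀, hA₀⟩ := exists_crit G
  obtain ⟨A, hA, hmax⟩ := Set.exists_max_image _ (fun S => S.ncard) hfin ⟨A₀, hA₀⟩
  refine ⟨A, hA, fun B hB => ?_⟩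
  by_contra h
  push_neg at h
  exact absurd (hmax B hB) (not_le.mpr h)

lemma ncard_le_indepNum (G : SimpleGraph V) {S : Set V} (hS : IsIndep G S) :
    S.ncard ≤ indepNum G := by
  apply le_csSup
  · refine ⟨Fintype.card V, ?_⟩
    rintro n ⟨T, -, rfl⟩
    calc T.ncard ≤ (Set.univ : Set V).ncard :=
          Set.ncard_le_ncard (Set.subset_univ T) (Set.toFinite _)
      _ = Fintype.card V := by rw [Set.ncard_univ, Nat.card_eq_fintype_card]
  · exact ⟨S, hS, rfl⟩

/-- Every critical independent set is contained in `A ∪ N(A)` for a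
maximum-cardinality critical independent set `A`. -/
lemma crit_subset_max (G : SimpleGraph V) {A J : Set V} (hA : IsCriticalIndep G A)
    (hAmax : ∀ B, IsCriticalIndep G B → B.ncard ≤ A.ncard)
    (hJ : IsCriticalIndep G J) : J ⊆ A ∪ nbhdSet G A := by
  set U := A ∪ J with hU
  have hdU : diffSet G A ≤ diffSet G U := by
    have hsup := diff_supermod G A J
    rw [← hU] at hsup
    have h1 : diffSet G (A ∩ J) ≤ diffSet G A := hA.2 _ (indep_subset G Set.inter_subset_left hA.1)
    have h2 : diffSet G A ≤ diffSet G J := hJ.2 _ hA.1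
    omega
  set Z := U \ nbhdSet G U with hZ
  have hZindep : IsIndep G Z := indep_sdiff_nbhd G U
  have hdZ : diffSet G A ≤ diffSet G Z := le_trans hdU (diff_le_sdiff_nbhd G U)
  have hZcrit : IsCriticalIndep G Z := ⟨hZindep, fun J' hJ' => le_trans (hA.2 J' hJ') hdZ⟩
  have hZAindep : IsIndep G (Z ∪ A) := by
    intro u hu v hv hadj
    rcases hu with hu | hu
    · rcases hv with hv | hv
      · exact hZindep hu hv hadj
      · exact hu.2 ⟨v, Or.inl hv, hadj.symm⟩
    · rcases hv with hv | hv
      · exact hv.2 ⟨u, Or.inl hu, hadj⟩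
      · exact hA.1 hu hv hadj
  have hZAcrit : IsCriticalIndep G (Z ∪ A) := by
    refine ⟨hZAindep, fun J' hJ' => ?_⟩
    have hsup := diff_supermod G Z A
    have h1 : diffSet G (Z ∩ A) ≤ diffSet G A := hA.2 _ (indep_subset G Set.inter_subset_right hA.1)
    have h2 := hA.2 J' hJ'
    omega
  have hAZA : A = Z ∪ A :=
    Set.eq_of_subset_of_ncard_le Set.subset_union_right (hAmax _ hZAcrit) (Set.toFinite _)
  have hZA : Z ⊆ A := by
    intro z hz
    rw [hAZA]
    exact Or.inl hz
  intro x hx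
  by_contra hmem
  simp only [Set.mem_union, not_or] at hmem
  have hxZ : x ∈ Z := by
    refine ⟨Or.inr hx, ?_⟩
    rw [hU, nbhd_union]
    rintro (hxA | ⟨u, hu, hux⟩)
    · exact hmem.2 hxA
    · exact hJ.1 hu hx hux
  exact hmem.1 (hZA hxZ)

end Aux

/-- For every finite simple graph `G`,
`|ker(G)| + |diadem(G)| ≤ 2·α(G)`. -/
theorem ker_diadem_le_two_alpha (G : SimpleGraph V) :
    (kerSet G).ncard + (diademSet G).ncard ≤ 2 * indepNum G := by
  obtain ⟨A, hA, hAmax⟩ := exists_max_crit G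
  set K := kerSet G with hK
  set D := diademSet G with hD
  have hKA : K ⊆ A := Set.sInter_subset_of_mem hA
  have hKindep : IsIndep G K := indep_subset G hKA hA.1
  have hdK : diffSet G K ≤ diffSet G A := hA.2 _ hKindep
  have hDNK : D ∩ nbhdSet G K = ∅ := by
    ext v
    simp only [Set.mem_inter_iff, Set.mem_empty_iff_false, iff_false, not_and]
    rintro ⟨J, hJ, hvJ⟩ ⟨k, hk, hkv⟩
    have hkJ : k ∈ J := (Set.sInter_subset_of_mem hJ) hk
    exact hJ.1 hkJ hvJ hkv
  have hDA : D ⊆ A ∪ nbhdSet G A := by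
    rintro v ⟨J, hJ, hvJ⟩
    exact crit_subset_max G hA hAmax hJ hvJ
  -- cardinality bookkeeping
  have hNKA : nbhdSet G K ⊆ nbhdSet G A := nbhd_mono G hKA
  have hDcard : D.ncard ≤ (D ∩ A).ncard + (D ∩ nbhdSet G A).ncard := by
    have : D ⊆ (D ∩ A) ∪ (D ∩ nbhdSet G A) := by
      intro v hv
      rcases hDA hv with h | h
      exacts [Or.inl ⟨hv, h⟩, Or.inr ⟨hv, h⟩]
    exact le_trans (Set.ncard_le_ncard this (Set.toFinite _)) (Set.ncard_union_le _ _)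
  have hDA' : (D ∩ A).ncard ≤ A.ncard := Set.ncard_le_ncard Set.inter_subset_right (Set.toFinite _)
  have hDNA : (D ∩ nbhdSet G A).ncard ≤ (nbhdSet G A \ nbhdSet G K).ncard := by
    refine Set.ncard_le_ncard ?_ (Set.toFinite _)
    rintro v ⟨hvD, hvNA⟩
    refine ⟨hvNA, fun hvNK => ?_⟩
    have : v ∈ D ∩ nbhdSet G K := ⟨hvD, hvNK⟩
    rw [hDNK] at this
    exact this
  have hNdiff : (nbhdSet G A \ nbhdSet G K).ncard + (nbhdSet G K).ncard =
      (nbhdSet G A).ncard :=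
    Set.ncard_diff_add_ncard_of_subset hNKA (Set.toFinite _)
  have hAα : A.ncard ≤ indepNum G := ncard_le_indepNum G hA.1
  unfold diffSet at hdK
  omega
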